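/- arXiv:2306.07133 — 2 statements merged into one kernel-verified Lean document; each statement's English description precedes it below -/
import Mathlib

section
/- Let α be an even natural number with α ≥ 2, let β satisfy 1/α + 1/β = 1, and let p : [0,1] → ℝ be measurable with ‖p − 1‖_{L^α([0,1])} ≤ K for some K ≥ 0. Define e(x) = (1-x)∫_0^x z·p(z)dz + x∫_x^1 (1-z)p(z)dz and e_∞(x) = x(1-x)/2. Then |e(x) − e_∞(x)| ≤ (β+1)^{-1/β}·x(1-x)·K·(x^{1/β} + (1-x)^{1/β}) ≤ x(1-x)·K for all x ∈ [0,1]. -/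
open Real intervalIntegral MeasureTheory
open scoped ENNReal NNReal

private lemma holder_aux {a b β αr K : ℝ} (hab : a ≤ b) (hconj : Real.HolderConjugate β αr)
    {w g : ℝ → ℝ} (hw : Measurable w)
    (hw0 : ∀ z ∈ Set.Ioc a b, 0 ≤ w z ∧ w z ≤ b - a)
    (hwint : ∫ z in Set.Ioc a b, w z ^ β = (b - a) ^ (β + 1) / (β + 1))
    (hg : MemLp g (ENNReal.ofReal αr) (volume.restrict (Set.Ioc a b)))
    (hK : 0 ≤ K)
    (hgK : (∫ z in Set.Ioc a b, |g z| ^ αr) ^ (1 / αr) ≤ K) :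
    |∫ z in Set.Ioc a b, w z * g z| ≤
      (β + 1) ^ (-(1 / β)) * ((b - a) * (b - a) ^ (1 / β)) * K := by
  haveI : IsFiniteMeasure (volume.restrict (Set.Ioc a b)) :=
    ⟨by rw [Measure.restrict_apply_univ]; exact measure_Ioc_lt_top⟩
  have hβ1 : 1 < β := (Real.holderConjugate_iff.mp hconj).1
  have hβpos : 0 < β := hconj.left_pos
  have hba : 0 ≤ b - a := by linarith
  have hb1 : (0 : ℝ) < β + 1 := by linarith
  have hmem : ∀ᵐ z ∂(volume.restrict (Set.Ioc a b)), z ∈ Set.Ioc a b :=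
    ae_restrict_mem measurableSet_Ioc
  have hwnn : 0 ≤ᵐ[volume.restrict (Set.Ioc a b)] w :=
    hmem.mono fun z hz => (hw0 z hz).1
  have h1 : |∫ z in Set.Ioc a b, w z * g z| ≤ ∫ z in Set.Ioc a b, w z * |g z| := by
    have h2 := MeasureTheory.norm_integral_le_integral_norm (μ := volume.restrict (Set.Ioc a b))
      (f := fun z => w z * g z)
    simp only [Real.norm_eq_abs] at h2
    refine h2.trans (le_of_eq (integral_congr_ae (hmem.mono fun z hz => ?_)))
    simp only []
    rw [abs_mul, abs_of_nonneg (hw0 z hz).1]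
  have hwmem : MemLp w (ENNReal.ofReal β) (volume.restrict (Set.Ioc a b)) :=
    MemLp.of_bound hw.aestronglyMeasurable (b - a)
      (hmem.mono fun z hz => by
        rw [Real.norm_eq_abs, abs_of_nonneg (hw0 z hz).1]; exact (hw0 z hz).2)
  have hgabs : MemLp (fun z => |g z|) (ENNReal.ofReal αr) (volume.restrict (Set.Ioc a b)) := by
    simpa [Real.norm_eq_abs] using hg.norm
  have hholder := MeasureTheory.integral_mul_le_Lp_mul_Lq_of_nonneg hconj hwnn
    (Filter.Eventually.of_forall fun z => abs_nonneg _) hwmem hgabs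
  rw [hwint] at hholder
  have hC : ((b - a) ^ (β + 1) / (β + 1)) ^ (1 / β)
      = (β + 1) ^ (-(1 / β)) * ((b - a) * (b - a) ^ (1 / β)) := by
    rw [Real.div_rpow (Real.rpow_nonneg hba _) hb1.le, ← Real.rpow_mul hba]
    have he : (β + 1) * (1 / β) = 1 + 1 / β := by field_simp
    rw [he, Real.rpow_add_of_nonneg hba zero_le_one (by positivity), Real.rpow_one,
      Real.rpow_neg hb1.le, div_eq_mul_inv, mul_comm]
  rw [hC] at hholder
  have hCnn : 0 ≤ (β + 1) ^ (-(1 / β)) * ((b - a) * (b - a) ^ (1 / β)) := by positivity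
  calc |∫ z in Set.Ioc a b, w z * g z|
      ≤ ∫ z in Set.Ioc a b, w z * |g z| := h1
    _ ≤ (β + 1) ^ (-(1 / β)) * ((b - a) * (b - a) ^ (1 / β))
        * (∫ z in Set.Ioc a b, |g z| ^ αr) ^ (1 / αr) := hholder
    _ ≤ (β + 1) ^ (-(1 / β)) * ((b - a) * (b - a) ^ (1 / β)) * K :=
        mul_le_mul_of_nonneg_left hgK hCnn

private lemma sqrt_add_sqrt_le {x : ℝ} (hx0 : 0 ≤ x) (hx1 : x ≤ 1) :
    Real.sqrt x + Real.sqrt (1 - x) ≤ Real.sqrt 2 := by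
  have ha := Real.sq_sqrt hx0
  have hb := Real.sq_sqrt (by linarith : (0:ℝ) ≤ 1 - x)
  apply (Real.le_sqrt (by positivity) (by norm_num)).mpr
  nlinarith [sq_nonneg (Real.sqrt x - Real.sqrt (1 - x)), Real.sqrt_nonneg x,
    Real.sqrt_nonneg (1 - x)]

/-- Decay estimate: if `‖p − 1‖_{L^α([0,1])} ≤ K` with `α` even, `1/α + 1/β = 1`, then
`|e(x) − e_∞(x)| ≤ (β+1)^{-1/β}·x(1-x)·K·(x^{1/β} + (1-x)^{1/β}) ≤ x(1-x)·K`. -/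
theorem decay_estimate (α : ℕ) (hα : Even α) (hα2 : 2 ≤ α) (β K : ℝ)
    (hβ : 1 / (α : ℝ) + 1 / β = 1) (hK : 0 ≤ K)
    (p : ℝ → ℝ) (hp : Measurable p)
    (hnorm : eLpNorm (fun z => p z - 1) α (volume.restrict (Set.Icc (0 : ℝ) 1))
      ≤ ENNReal.ofReal K) :
    ∀ x ∈ Set.Icc (0 : ℝ) 1,
      |((1 - x) * (∫ z in (0 : ℝ)..x, z * p z) + x * (∫ z in x..(1 : ℝ), (1 - z) * p z))
          - x * (1 - x) / 2|
        ≤ (β + 1) ^ (-(1 / β)) * (x * (1 - x)) * K * (x ^ (1 / β) + (1 - x) ^ (1 / β)) ∧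
      (β + 1) ^ (-(1 / β)) * (x * (1 - x)) * K * (x ^ (1 / β) + (1 - x) ^ (1 / β))
        ≤ x * (1 - x) * K := by
  intro x hx
  obtain ⟨hx0, hx1⟩ := hx
  set q : ℝ → ℝ := fun z => p z - 1 with hqdef
  have hαr2 : (2 : ℝ) ≤ (α : ℝ) := by exact_mod_cast hα2
  have hαpos : (0 : ℝ) < (α : ℝ) := by linarith
  have h1α : 1 / (α : ℝ) ≤ 1 / 2 := by
    apply one_div_le_one_div_of_le <;> linarith
  have h1αpos : 0 < 1 / (α : ℝ) := by positivity
  have htβ : 1 / β = 1 - 1 / (α : ℝ) := by linarith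
  have htpos : 0 < 1 / β := by rw [htβ]; linarith
  have ht2 : (1 : ℝ) / 2 ≤ 1 / β := by rw [htβ]; linarith
  have hβpos : 0 < β := one_div_pos.mp htpos
  have hβ1 : 1 < β := by
    rw [lt_iff_not_ge]
    intro h
    have : 1 ≤ 1 / β := by
      rw [le_div_iff₀ hβpos]; linarith
    rw [htβ] at this; linarith
  have hconj : Real.HolderConjugate β (α : ℝ) :=
    Real.holderConjugate_iff.mpr ⟨hβ1, by rw [inv_eq_one_div, inv_eq_one_div]; linarith⟩
  -- Memℒp facts
  have hαne0 : ((α : ℕ) : ℝ≥0∞) ≠ 0 := by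
    simp only [ne_eq, Nat.cast_eq_zero]; omega
  have hαnetop : ((α : ℕ) : ℝ≥0∞) ≠ ⊤ := ENNReal.natCast_ne_top α
  have hqmeas : Measurable q := hp.sub measurable_const
  have hqmem : MemLp q ((α : ℕ) : ℝ≥0∞) (volume.restrict (Set.Icc (0:ℝ) 1)) :=
    ⟨hqmeas.aestronglyMeasurable, hnorm.trans_lt ENNReal.ofReal_lt_top⟩
  have hIK : (∫ z in Set.Icc (0:ℝ) 1, |q z| ^ (α : ℝ)) ^ (1 / (α : ℝ)) ≤ K := by
    have he := hqmem.eLpNorm_eq_integral_rpow_norm hαne0 hαnetop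
    rw [he] at hnorm
    have := (ENNReal.ofReal_le_ofReal_iff hK).mp hnorm
    simpa [ENNReal.toReal_natCast, Real.norm_eq_abs, one_div] using this
  have hqint : IntegrableOn (fun z => |q z| ^ (α : ℝ)) (Set.Icc (0:ℝ) 1) volume := by
    have := hqmem.integrable_norm_rpow hαne0 hαnetop
    simpa [ENNReal.toReal_natCast, Real.norm_eq_abs, IntegrableOn] using this
  have key : ∀ s : Set ℝ, s ⊆ Set.Icc (0:ℝ) 1 →
      (∫ z in s, |q z| ^ (α : ℝ)) ^ (1 / (α : ℝ)) ≤ K := by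
    intro s hs
    refine le_trans ?_ hIK
    apply Real.rpow_le_rpow
    · apply MeasureTheory.integral_nonneg
      intro z; positivity
    · apply setIntegral_mono_set hqint
      · exact Filter.Eventually.of_forall fun z => by positivity
      · exact HasSubset.Subset.eventuallyLE hs
    · positivity
  have hsub1 : Set.Ioc (0:ℝ) x ⊆ Set.Icc (0:ℝ) 1 :=
    fun z hz => ⟨le_of_lt hz.1, hz.2.trans hx1⟩
  have hsub2 : Set.Ioc x (1:ℝ) ⊆ Set.Icc (0:ℝ) 1 :=
    fun z hz => ⟨hx0.trans (le_of_lt hz.1), hz.2⟩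
  have hmem1 : MemLp q (ENNReal.ofReal (α : ℝ)) (volume.restrict (Set.Ioc (0:ℝ) x)) := by
    rw [ENNReal.ofReal_natCast]
    exact hqmem.mono_measure (Measure.restrict_mono hsub1 le_rfl)
  have hmem2 : MemLp q (ENNReal.ofReal (α : ℝ)) (volume.restrict (Set.Ioc x (1:ℝ))) := by
    rw [ENNReal.ofReal_natCast]
    exact hqmem.mono_measure (Measure.restrict_mono hsub2 le_rfl)
  -- first Hölder piece
  have hw1 : ∫ z in Set.Ioc (0:ℝ) x, z ^ β = (x - 0) ^ (β + 1) / (β + 1) := by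
    rw [← intervalIntegral.integral_of_le hx0,
      integral_rpow (Or.inl (by linarith : (-1:ℝ) < β)),
      Real.zero_rpow (by linarith : β + 1 ≠ 0)]
    ring_nf
  have hbound1 := holder_aux (w := fun z => z) hx0 hconj measurable_id'
    (fun z hz => ⟨le_of_lt hz.1, by show z ≤ x - 0; simpa using hz.2⟩) hw1 hmem1 hK (key _ hsub1)
  have hw2 : ∫ z in Set.Ioc x (1:ℝ), (1 - z) ^ β = (1 - x) ^ (β + 1) / (β + 1) := by
    rw [← intervalIntegral.integral_of_le hx1]
    have := intervalIntegral.integral_comp_sub_left (a := x) (b := 1)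
      (fun u => u ^ β) 1
    rw [this, integral_rpow (Or.inl (by linarith : (-1:ℝ) < β)), sub_self,
      Real.zero_rpow (by linarith : β + 1 ≠ 0)]
    ring_nf
  have hbound2 := holder_aux (w := fun z => 1 - z) hx1 hconj (measurable_const.sub measurable_id')
    (fun z hz => ⟨by show (0:ℝ) ≤ 1 - z; linarith [hz.2], by show 1 - z ≤ 1 - x; linarith [hz.1]⟩)
    hw2 hmem2 hK (key _ hsub2)
  simp only [sub_zero] at hbound1
  -- integrability for splitting
  have hqint1 : IntegrableOn q (Set.Icc (0:ℝ) 1) volume := by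
    haveI : IsFiniteMeasure (volume.restrict (Set.Icc (0:ℝ) 1)) :=
      ⟨by rw [Measure.restrict_apply_univ]; exact measure_Icc_lt_top⟩
    exact hqmem.integrable (by exact_mod_cast Nat.one_le_cast.mpr (by omega))
  have hI1 : IntegrableOn (fun z => z * q z) (Set.Ioc (0:ℝ) x) volume := by
    apply Integrable.bdd_mul (c := 1) (hqint1.mono_set hsub1)
      measurable_id'.aestronglyMeasurable
    filter_upwards [ae_restrict_mem (measurableSet_Ioc : MeasurableSet (Set.Ioc (0:ℝ) x))]
      with z hz
    rw [Real.norm_eq_abs, abs_of_nonneg (le_of_lt hz.1)]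
    exact hz.2.trans hx1
  have hI2 : IntegrableOn (fun z => (1 - z) * q z) (Set.Ioc x (1:ℝ)) volume := by
    apply Integrable.bdd_mul (c := 1) (hqint1.mono_set hsub2)
      (measurable_const.sub measurable_id').aestronglyMeasurable
    filter_upwards [ae_restrict_mem (measurableSet_Ioc : MeasurableSet (Set.Ioc x (1:ℝ)))]
      with z hz
    simp only [Pi.sub_apply]
    rw [Real.norm_eq_abs, abs_of_nonneg (by linarith [hz.2] : (0:ℝ) ≤ 1 - z)]
    linarith [hx0.trans (le_of_lt hz.1)]
  have hIid1 : IntegrableOn (fun z => z) (Set.Ioc (0:ℝ) x) volume :=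
    continuous_id.integrableOn_Ioc
  have hIid2 : IntegrableOn (fun z => (1:ℝ) - z) (Set.Ioc x (1:ℝ)) volume :=
    (continuous_const.sub continuous_id).integrableOn_Ioc
  -- split the integrals
  have hA : ∫ z in (0:ℝ)..x, z * p z
      = (∫ z in Set.Ioc (0:ℝ) x, z * q z) + x ^ 2 / 2 := by
    rw [intervalIntegral.integral_of_le hx0]
    have hsplit : ∀ z : ℝ, z * p z = z * q z + z := fun z => by
      simp only [hqdef]; ring
    rw [show (fun z => z * p z) = fun z => z * q z + z from funext hsplit]
    rw [MeasureTheory.integral_add hI1 hIid1]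
    congr 1
    rw [← intervalIntegral.integral_of_le hx0, integral_id]
    ring
  have hB : ∫ z in x..(1:ℝ), (1 - z) * p z
      = (∫ z in Set.Ioc x (1:ℝ), (1 - z) * q z) + (1 - x) ^ 2 / 2 := by
    rw [intervalIntegral.integral_of_le hx1]
    have hsplit : ∀ z : ℝ, (1 - z) * p z = (1 - z) * q z + (1 - z) := fun z => by
      simp only [hqdef]; ring
    rw [show (fun z => (1 - z) * p z) = fun z => (1 - z) * q z + (1 - z) from funext hsplit]
    rw [MeasureTheory.integral_add hI2 hIid2]
    congr 1
    rw [← intervalIntegral.integral_of_le hx1,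
      integral_sub intervalIntegrable_const intervalIntegrable_id,
      integral_id, integral_one]
    simp; ring
  have hbound1' : |∫ z in Set.Ioc (0:ℝ) x, z * q z|
      ≤ (β + 1) ^ (-(1 / β)) * (x * x ^ (1 / β)) * K := hbound1
  have hbound2' : |∫ z in Set.Ioc x (1:ℝ), (1 - z) * q z|
      ≤ (β + 1) ^ (-(1 / β)) * ((1 - x) * (1 - x) ^ (1 / β)) * K := hbound2
  have hmain : ((1 - x) * (∫ z in (0:ℝ)..x, z * p z)
        + x * (∫ z in x..(1:ℝ), (1 - z) * p z)) - x * (1 - x) / 2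
      = (1 - x) * (∫ z in Set.Ioc (0:ℝ) x, z * q z)
        + x * (∫ z in Set.Ioc x (1:ℝ), (1 - z) * q z) := by
    rw [hA, hB]; ring
  constructor
  · rw [hmain]
    calc |(1 - x) * (∫ z in Set.Ioc (0:ℝ) x, z * q z)
          + x * (∫ z in Set.Ioc x (1:ℝ), (1 - z) * q z)|
        ≤ (1 - x) * |∫ z in Set.Ioc (0:ℝ) x, z * q z|
          + x * |∫ z in Set.Ioc x (1:ℝ), (1 - z) * q z| := by
          refine (abs_add_le _ _).trans ?_
          rw [abs_mul, abs_mul, abs_of_nonneg (by linarith : (0:ℝ) ≤ 1 - x),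
            abs_of_nonneg hx0]
      _ ≤ (1 - x) * ((β + 1) ^ (-(1 / β)) * (x * x ^ (1 / β)) * K)
          + x * ((β + 1) ^ (-(1 / β)) * ((1 - x) * (1 - x) ^ (1 / β)) * K) :=
          add_le_add (mul_le_mul_of_nonneg_left hbound1' (by linarith))
            (mul_le_mul_of_nonneg_left hbound2' hx0)
      _ = (β + 1) ^ (-(1 / β)) * (x * (1 - x)) * K
            * (x ^ (1 / β) + (1 - x) ^ (1 / β)) := by ring
  · have hsq : ∀ y : ℝ, 0 ≤ y → y ≤ 1 → y ^ (1 / β) ≤ Real.sqrt y := by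
      intro y hy0 hy1
      rcases eq_or_lt_of_le hy0 with h | h
      · rw [← h, Real.zero_rpow (by linarith : (1:ℝ)/β ≠ 0), Real.sqrt_zero]
      · rw [Real.sqrt_eq_rpow]
        exact Real.rpow_le_rpow_of_exponent_ge h hy1 ht2
    have hsum : x ^ (1 / β) + (1 - x) ^ (1 / β) ≤ Real.sqrt 2 := by
      have h1 := hsq x hx0 hx1
      have h2 := hsq (1 - x) (by linarith) (by linarith)
      have hs2 := sqrt_add_sqrt_le hx0 hx1
      linarith
    have hc : (β + 1) ^ (-(1 / β)) ≤ (Real.sqrt 2)⁻¹ := by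
      rw [Real.rpow_neg (by linarith : (0:ℝ) ≤ β + 1)]
      apply inv_anti₀ (Real.sqrt_pos.mpr two_pos)
      calc Real.sqrt 2 = (2:ℝ) ^ ((1:ℝ)/2) := Real.sqrt_eq_rpow 2
        _ ≤ (2:ℝ) ^ (1/β) := Real.rpow_le_rpow_of_exponent_le one_le_two ht2
        _ ≤ (β + 1) ^ (1/β) :=
            Real.rpow_le_rpow (by norm_num) (by linarith) (le_of_lt htpos)
    have hnn : 0 ≤ x ^ (1 / β) + (1 - x) ^ (1 / β) :=
      add_nonneg (Real.rpow_nonneg hx0 _) (Real.rpow_nonneg (by linarith) _)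
    have hone : (β + 1) ^ (-(1 / β)) * (x ^ (1 / β) + (1 - x) ^ (1 / β)) ≤ 1 := by
      calc (β + 1) ^ (-(1 / β)) * (x ^ (1 / β) + (1 - x) ^ (1 / β))
          ≤ (Real.sqrt 2)⁻¹ * Real.sqrt 2 :=
            mul_le_mul hc hsum hnn (by positivity)
        _ = 1 := inv_mul_cancel₀ (ne_of_gt (Real.sqrt_pos.mpr two_pos))
    have hxxK : 0 ≤ x * (1 - x) * K := mul_nonneg (mul_nonneg hx0 (by linarith)) hK
    calc (β + 1) ^ (-(1 / β)) * (x * (1 - x)) * K * (x ^ (1 / β) + (1 - x) ^ (1 / β))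
        = ((β + 1) ^ (-(1 / β)) * (x ^ (1 / β) + (1 - x) ^ (1 / β)))
            * (x * (1 - x) * K) := by ring
      _ ≤ 1 * (x * (1 - x) * K) := mul_le_mul_of_nonneg_right hone hxxK
      _ = x * (1 - x) * K := one_mul _
end

section
/- For the explicit finite-difference scheme v_n^{m-1} = sup_{a ∈ [1/e, d]} { π(a)·v_{n+1}^m + (1 − 2π(a))·v_n^m + π(a)·v_{n-1}^m + (k/2)(log a + 1) }, with π(a) = k·a/(2h²), boundary values v_0^m = v_N^m = 0 and terminal values v_n^M = 0: if k·d/h² ≤ 1, then the scheme is monotone (π(a) ≥ 0 and 1 − 2π(a) ≥ 0 for all a ∈ [1/e, d]) and 0 ≤ v_n^m ≤ x_n(1 − x_n)/2 for all n ∈ {0,…,N}, m ∈ {0,…,M}, where x_n = n·h. -/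
set_option maxHeartbeats 1000000


open Real

/-- Monotonicity and bounds for the explicit finite-difference scheme: with
`h = 1/N`, `k = T/M`, `π(a) = k·a/(2h²)`, boundary/terminal values zero and the scheme
`v_n^{m-1} = sup_{a ∈ [1/e,d]} {π(a)v_{n+1}^m + (1−2π(a))v_n^m + π(a)v_{n-1}^m + (k/2)(log a + 1)}`,
if `k·d/h² ≤ 1` then `π(a) ≥ 0`, `1 − 2π(a) ≥ 0` on `[1/e,d]`, and
`0 ≤ v_n^m ≤ x_n(1−x_n)/2` with `x_n = n·h`. -/
theorem explicit_scheme_bounds (N M : ℕ) (hN : 0 < N) (hM : 0 < M)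
    (T d : ℝ) (hT : 0 < T) (hd : Real.exp (-1) ≤ d)
    (h k : ℝ) (hh : h = 1 / N) (hk : k = T / M)
    (hCFL : k * d / h ^ 2 ≤ 1)
    (v : ℕ → ℕ → ℝ)
    (hbc0 : ∀ m, m ≤ M → v 0 m = 0) (hbcN : ∀ m, m ≤ M → v N m = 0)
    (htc : ∀ n, n ≤ N → v n M = 0)
    (hscheme : ∀ m, 1 ≤ m → m ≤ M → ∀ n, 1 ≤ n → n ≤ N - 1 →
      v n (m - 1) = sSup {z : ℝ | ∃ a : ℝ, Real.exp (-1) ≤ a ∧ a ≤ d ∧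
        z = (k * a / (2 * h ^ 2)) * v (n + 1) m
          + (1 - 2 * (k * a / (2 * h ^ 2))) * v n m
          + (k * a / (2 * h ^ 2)) * v (n - 1) m
          + (k / 2) * (Real.log a + 1)}) :
    (∀ a : ℝ, Real.exp (-1) ≤ a → a ≤ d →
      0 ≤ k * a / (2 * h ^ 2) ∧ 0 ≤ 1 - 2 * (k * a / (2 * h ^ 2))) ∧
    (∀ n, n ≤ N → ∀ m, m ≤ M →
      0 ≤ v n m ∧ v n m ≤ ((n : ℝ) * h) * (1 - (n : ℝ) * h) / 2) := by
  have hNpos : (0 : ℝ) < N := Nat.cast_pos.2 hN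
  have hMpos : (0 : ℝ) < M := Nat.cast_pos.2 hM
  have hh0 : 0 < h := by rw [hh]; positivity
  have hk0 : 0 < k := by rw [hk]; positivity
  have hh2 : (0 : ℝ) < h ^ 2 := by positivity
  have hNh : (N : ℝ) * h = 1 := by rw [hh]; field_simp
  have hkd : k * d ≤ h ^ 2 := (div_le_one hh2).mp hCFL
  have hpi : ∀ a : ℝ, Real.exp (-1) ≤ a → a ≤ d →
      0 ≤ k * a / (2 * h ^ 2) ∧ 0 ≤ 1 - 2 * (k * a / (2 * h ^ 2)) := by
    intro a ha1 ha2
    have ha0 : 0 < a := lt_of_lt_of_le (Real.exp_pos _) ha1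
    have hka : k * a ≤ h ^ 2 :=
      le_trans (mul_le_mul_of_nonneg_left ha2 hk0.le) hkd
    constructor
    · positivity
    · have : 2 * (k * a / (2 * h ^ 2)) = k * a / h ^ 2 := by
        field_simp
      rw [this]
      have : k * a / h ^ 2 ≤ 1 := (div_le_one hh2).mpr hka
      linarith
  -- nonnegativity of the super-solution g on the grid
  have hgnn : ∀ n : ℕ, n ≤ N → 0 ≤ ((n : ℝ) * h) * (1 - (n : ℝ) * h) / 2 := by
    intro n hn
    have h1 : (0 : ℝ) ≤ (n : ℝ) * h := by positivity
    have h2 : (n : ℝ) * h ≤ 1 := by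
      rw [← hNh]
      exact mul_le_mul_of_nonneg_right (Nat.cast_le.2 hn) hh0.le
    have : 0 ≤ 1 - (n : ℝ) * h := by linarith
    positivity
  have key : ∀ j m : ℕ, m + j = M → ∀ n, n ≤ N →
      0 ≤ v n m ∧ v n m ≤ ((n : ℝ) * h) * (1 - (n : ℝ) * h) / 2 := by
    intro j
    induction j with
    | zero =>
      intro m hm n hn
      have : m = M := by omega
      subst this
      rw [htc n hn]
      exact ⟨le_refl 0, hgnn n hn⟩
    | succ j ih =>
      intro m hm n hn
      have hm1 : (m + 1) + j = M := by omega
      have ihm := ih (m + 1) hm1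
      have hmM : m + 1 ≤ M := by omega
      have hmM' : m ≤ M := by omega
      rcases eq_or_ne n 0 with rfl | hn0
      · rw [hbc0 m hmM']
        simpa using ⟨le_refl (0:ℝ), by simp⟩
      rcases eq_or_ne n N with rfl | hnN
      · rw [hbcN m hmM']
        constructor
        · exact le_refl 0
        · rw [hNh]; simp
      have h1n : 1 ≤ n := by omega
      have hnN1 : n ≤ N - 1 := by omega
      have hn1N : n + 1 ≤ N := by omega
      have hn1N' : n - 1 ≤ N := by omega
      have hs := hscheme (m + 1) (by omega) hmM n h1n hnN1
      simp only [Nat.add_sub_cancel] at hs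
      obtain ⟨hvp0, hvp1⟩ := ihm (n + 1) hn1N
      obtain ⟨hv00, hv01⟩ := ihm n hn
      obtain ⟨hvm0, hvm1⟩ := ihm (n - 1) hn1N'
      have c1 : ((n + 1 : ℕ) : ℝ) = (n : ℝ) + 1 := by push_cast; ring
      have c2 : ((n - 1 : ℕ) : ℝ) = (n : ℝ) - 1 := by
        have := Nat.cast_sub h1n (R := ℝ); simpa using this
      set gn := ((n : ℝ) * h) * (1 - (n : ℝ) * h) / 2 with hgn
      -- every element of the set is ≤ gn
      have hub : ∀ z ∈ {z : ℝ | ∃ a : ℝ, Real.exp (-1) ≤ a ∧ a ≤ d ∧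
          z = (k * a / (2 * h ^ 2)) * v (n + 1) (m + 1)
            + (1 - 2 * (k * a / (2 * h ^ 2))) * v n (m + 1)
            + (k * a / (2 * h ^ 2)) * v (n - 1) (m + 1)
            + (k / 2) * (Real.log a + 1)}, z ≤ gn := by
        rintro z ⟨a, ha1, ha2, rfl⟩
        have ha0 : 0 < a := lt_of_lt_of_le (Real.exp_pos _) ha1
        obtain ⟨hp1, hp2⟩ := hpi a ha1 ha2
        set p := k * a / (2 * h ^ 2) with hp
        have hlog : Real.log a ≤ a - 1 := Real.log_le_sub_one_of_pos ha0
        have hgsum : p * (((n + 1 : ℕ) : ℝ) * h * (1 - ((n + 1 : ℕ) : ℝ) * h) / 2)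
            + (1 - 2 * p) * gn
            + p * (((n - 1 : ℕ) : ℝ) * h * (1 - ((n - 1 : ℕ) : ℝ) * h) / 2)
            = gn - p * h ^ 2 := by
          rw [c1, c2, hgn]; ring
        have hph : p * h ^ 2 = k * a / 2 := by
          rw [hp]; field_simp
        have step1 : p * v (n + 1) (m + 1) + (1 - 2 * p) * v n (m + 1)
            + p * v (n - 1) (m + 1)
            ≤ p * (((n + 1 : ℕ) : ℝ) * h * (1 - ((n + 1 : ℕ) : ℝ) * h) / 2)
            + (1 - 2 * p) * gn
            + p * (((n - 1 : ℕ) : ℝ) * h * (1 - ((n - 1 : ℕ) : ℝ) * h) / 2) := by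
          gcongr <;> assumption
        have step2 : (k / 2) * (Real.log a + 1) ≤ (k / 2) * a := by
          have : Real.log a + 1 ≤ a := by linarith
          exact mul_le_mul_of_nonneg_left this (by linarith)
        have step1' : p * v (n + 1) (m + 1) + (1 - 2 * p) * v n (m + 1)
            + p * v (n - 1) (m + 1) ≤ gn - p * h ^ 2 := hgsum ▸ step1
        have hB : (k / 2) * a = k * a / 2 := by ring
        linarith [step1', step2]
      have hne : ({z : ℝ | ∃ a : ℝ, Real.exp (-1) ≤ a ∧ a ≤ d ∧
          z = (k * a / (2 * h ^ 2)) * v (n + 1) (m + 1)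
            + (1 - 2 * (k * a / (2 * h ^ 2))) * v n (m + 1)
            + (k * a / (2 * h ^ 2)) * v (n - 1) (m + 1)
            + (k / 2) * (Real.log a + 1)}).Nonempty :=
        ⟨_, Real.exp (-1), le_refl _, hd, rfl⟩
      have hbdd : BddAbove {z : ℝ | ∃ a : ℝ, Real.exp (-1) ≤ a ∧ a ≤ d ∧
          z = (k * a / (2 * h ^ 2)) * v (n + 1) (m + 1)
            + (1 - 2 * (k * a / (2 * h ^ 2))) * v n (m + 1)
            + (k * a / (2 * h ^ 2)) * v (n - 1) (m + 1)
            + (k / 2) * (Real.log a + 1)} := ⟨gn, hub⟩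
      constructor
      · -- lower bound: evaluate at a = exp(-1)
        rw [hs]
        have hmem : (k * Real.exp (-1) / (2 * h ^ 2)) * v (n + 1) (m + 1)
            + (1 - 2 * (k * Real.exp (-1) / (2 * h ^ 2))) * v n (m + 1)
            + (k * Real.exp (-1) / (2 * h ^ 2)) * v (n - 1) (m + 1)
            + (k / 2) * (Real.log (Real.exp (-1)) + 1)
            ∈ {z : ℝ | ∃ a : ℝ, Real.exp (-1) ≤ a ∧ a ≤ d ∧
          z = (k * a / (2 * h ^ 2)) * v (n + 1) (m + 1)
            + (1 - 2 * (k * a / (2 * h ^ 2))) * v n (m + 1)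
            + (k * a / (2 * h ^ 2)) * v (n - 1) (m + 1)
            + (k / 2) * (Real.log a + 1)} := ⟨Real.exp (-1), le_refl _, hd, rfl⟩
        have hz0 : (0 : ℝ) ≤ (k * Real.exp (-1) / (2 * h ^ 2)) * v (n + 1) (m + 1)
            + (1 - 2 * (k * Real.exp (-1) / (2 * h ^ 2))) * v n (m + 1)
            + (k * Real.exp (-1) / (2 * h ^ 2)) * v (n - 1) (m + 1)
            + (k / 2) * (Real.log (Real.exp (-1)) + 1) := by
          obtain ⟨hp1, hp2⟩ := hpi (Real.exp (-1)) (le_refl _) hd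
          rw [Real.log_exp]
          have : ((-1 : ℝ) + 1) = 0 := by ring
          rw [this, mul_zero, add_zero]
          have t1 : 0 ≤ (k * Real.exp (-1) / (2 * h ^ 2)) * v (n + 1) (m + 1) :=
            mul_nonneg hp1 hvp0
          have t2 : 0 ≤ (1 - 2 * (k * Real.exp (-1) / (2 * h ^ 2))) * v n (m + 1) :=
            mul_nonneg hp2 hv00
          have t3 : 0 ≤ (k * Real.exp (-1) / (2 * h ^ 2)) * v (n - 1) (m + 1) :=
            mul_nonneg hp1 hvm0
          linarith
        exact le_trans hz0 (le_csSup hbdd hmem)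
      · rw [hs]
        exact csSup_le hne hub
  refine ⟨hpi, fun n hn m hm => key (M - m) m (by omega) n hn⟩
end
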